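/- arXiv:2211.04366 — 3 statements merged into one kernel-verified Lean document; each statement's English description precedes it below -/
import Mathlib

section
/- Let W be a dual Banach space and X ⊆ W a subspace admitting a Lebesgue decomposition X* = AC_W(X) ⊕₁ SG_W(X). A functional φ ∈ X* is singular (i.e. φ ∈ SG_W(X)) if and only if there exists a net (x_α) in the closed unit ball of X converging to 0 in the weak-* topology of W such that φ(x_α) converges to ‖φ‖. -/
open NormedSpace Filter Topology

noncomputable instance instAddCommGroupStrongDualC {V : Type*} [NormedAddCommGroup V] [NormedSpace ℂ V] :
    AddCommGroup (StrongDual ℂ V) := ContinuousLinearMap.addCommGroup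
noncomputable instance instSeminormedAddCommGroupStrongDualC {V : Type*} [NormedAddCommGroup V]
    [NormedSpace ℂ V] : SeminormedAddCommGroup (StrongDual ℂ V) :=
  ContinuousLinearMap.toSeminormedAddCommGroup

def WeakStarContinuous {V : Type*} [NormedAddCommGroup V] [NormedSpace ℂ V]
    (Φ : StrongDual ℂ V → ℂ) : Prop :=
  Continuous fun w : WeakDual ℂ V => Φ (WeakDual.toStrongDual w)

def ACset {V : Type*} [NormedAddCommGroup V] [NormedSpace ℂ V]
    (X : Subspace ℂ (StrongDual ℂ V)) : Set (StrongDual ℂ ↥X) :=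
  {φ | ∃ Φ : StrongDual ℂ V →ₗ[ℂ] ℂ, WeakStarContinuous Φ ∧ ∀ x : ↥X, Φ (x : StrongDual ℂ V) = φ x}

/-- `X` admits a Lebesgue decomposition relative to `W = V*`, witnessed by the bounded
linear idempotent `L` with range the absolutely continuous functionals, satisfying the
ℓ¹-norm identity. The singular functionals are those with `L φ = 0`. -/
def IsLebesgueDecomposition {V : Type*} [NormedAddCommGroup V] [NormedSpace ℂ V]
    (X : Subspace ℂ (StrongDual ℂ V)) (L : StrongDual ℂ ↥X →L[ℂ] StrongDual ℂ ↥X) : Prop :=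
  (∀ φ, L (L φ) = L φ) ∧ Set.range L = ACset X ∧
    ∀ φ : StrongDual ℂ ↥X, ‖φ‖ = ‖L φ‖ + ‖φ - L φ‖

-- numeric helper
private lemma stmt1_numeric {w : ℂ} {r ε : ℝ} (hr : 0 < r) (hw : ‖w‖ ≤ r) (hεw : ε ≤ ‖w - (r : ℂ)‖) (hε : 0 < ε) :
    w.re ≤ r - ε ^ 2 / (2 * r) := by
  have e1 : ‖w - (r : ℂ)‖ ^ 2 = (w.re - r) ^ 2 + w.im ^ 2 := by
    rw [Complex.sq_norm, Complex.normSq_apply]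
    simp [Complex.sub_re, Complex.sub_im]
    ring
  have e2 : ‖w‖ ^ 2 = w.re ^ 2 + w.im ^ 2 := by
    rw [Complex.sq_norm, Complex.normSq_apply]; ring
  have h1 : ε ^ 2 ≤ (w.re - r) ^ 2 + w.im ^ 2 := by
    rw [← e1]; exact pow_le_pow_left₀ hε.le hεw 2
  have h2 : w.re ^ 2 + w.im ^ 2 ≤ r ^ 2 := by
    rw [← e2]; exact pow_le_pow_left₀ (norm_nonneg _) hw 2
  have h2r : 0 < 2 * r := by linarith
  have key : ε ^ 2 ≤ (r - w.re) * (2 * r) := by nlinarith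
  have := (div_le_iff₀ h2r).mpr key
  linarith

set_option maxHeartbeats 2000000
set_option synthInstance.maxHeartbeats 1000000
private theorem stmt1_claim {V : Type u} [NormedAddCommGroup V] [NormedSpace ℂ V]
    (X : Subspace ℂ (StrongDual ℂ V)) (L : StrongDual ℂ ↥X →L[ℂ] StrongDual ℂ ↥X)
    (hidem : ∀ φ, L (L φ) = L φ) (hrange : Set.range L = ACset X)
    (hnorm : ∀ φ : StrongDual ℂ ↥X, ‖φ‖ = ‖L φ‖ + ‖φ - L φ‖)
    (φ : StrongDual ℂ ↥X) (h0 : L φ = 0) :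
    ∀ U ∈ 𝓝 (0 : WeakDual ℂ V), ∀ ε > (0 : ℝ), ∃ x : ↥X, ‖x‖ ≤ 1 ∧
      StrongDual.toWeakDual ((x : StrongDual ℂ V)) ∈ U ∧ ‖φ x - (‖φ‖ : ℂ)‖ < ε := by
  by_contra hcon
  push_neg at hcon
  obtain ⟨U, hU, ε, hε, hbad⟩ := hcon
  -- 0 is in U
  have hU0 : StrongDual.toWeakDual (((0 : ↥X) : StrongDual ℂ V)) ∈ U := by
    have : (((0 : ↥X) : StrongDual ℂ V)) = 0 := by simp
    rw [this, map_zero]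
    exact mem_of_mem_nhds hU
  -- ε ≤ ‖φ‖
  have hεφ : ε ≤ ‖φ‖ := by
    have := hbad 0 (by simp) hU0
    simp at this
    rwa [abs_of_nonneg (ContinuousLinearMap.opNorm_nonneg φ)] at this
  have hφpos : 0 < ‖φ‖ := lt_of_lt_of_le hε hεφ
  set c : ℝ := ε ^ 2 / (2 * ‖φ‖) with hc
  have hcpos : 0 < c := by positivity
  have hcle : c ≤ ‖φ‖ := by
    rw [hc, div_le_iff₀ (by linarith : (0:ℝ) < 2 * ‖φ‖)]
    nlinarith
  -- extract finite set I from U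
  replace hU : U ∈ 𝓝 (0 : WeakBilin (topDualPairing ℂ V)) := hU
  rw [nhds_induced (fun (w : WeakBilin (topDualPairing ℂ V)) v => topDualPairing ℂ V w v) 0] at hU
  obtain ⟨t, ht, hsub⟩ : ∃ t ∈ 𝓝 (fun v => topDualPairing ℂ V 0 v),
      (fun (w : WeakBilin (topDualPairing ℂ V)) v => topDualPairing ℂ V w v) ⁻¹' t ⊆ U :=
    Filter.mem_comap.mp hU
  rw [nhds_pi, Filter.mem_pi] at ht
  obtain ⟨I, hIfin, s, hs, hpi⟩ := ht
  have hmemU : ∀ w : WeakDual ℂ V, (∀ v ∈ I, w v = 0) → w ∈ U := by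
    intro w hw
    apply hsub; apply hpi
    intro v hv
    have h0' : topDualPairing ℂ V (0 : StrongDual ℂ V) v = 0 := by simp
    have := hs v
    rw [h0'] at this
    change topDualPairing ℂ V w v ∈ s v
    rw [show topDualPairing ℂ V w v = 0 from hw v hv]; exact mem_of_mem_nhds this
  -- evaluation functionals
  haveI : Finite ↥I := hIfin.to_subtype
  let e : V → StrongDual ℂ ↥X := fun v => (NormedSpace.inclusionInDoubleDual ℂ V v).comp X.subtypeL
  let Lmap : ↥I → (↥X →ₗ[ℂ] ℂ) := fun v => (e v.1 : ↥X →ₗ[ℂ] ℂ)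
  set N : Submodule ℂ ↥X := ⨅ (v : ↥I), LinearMap.ker (Lmap v) with hN
  have hNmem : ∀ z : ↥X, z ∈ N ↔ ∀ v : ↥I, (z : StrongDual ℂ V) v.1 = 0 := by
    intro z
    simp only [hN, Submodule.mem_iInf, LinearMap.mem_ker]
    rfl
  -- key0 : real-part bound on N ∩ ball
  have key0 : ∀ z : ↥X, z ∈ N → ‖z‖ ≤ 1 → (φ z).re ≤ ‖φ‖ - c := by
    intro z hz hz1
    have hmem : StrongDual.toWeakDual ((z : StrongDual ℂ V)) ∈ U := by
      apply hmemU
      intro v hv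
      exact (hNmem z).mp hz ⟨v, hv⟩
    have h1 := hbad z hz1 hmem
    have h2 : ‖φ z‖ ≤ ‖φ‖ := by
      calc ‖φ z‖ ≤ ‖φ‖ * ‖z‖ := φ.le_opNorm z
      _ ≤ ‖φ‖ * 1 := mul_le_mul_of_nonneg_left hz1 (ContinuousLinearMap.opNorm_nonneg _)
      _ = ‖φ‖ := mul_one _
    exact stmt1_numeric hφpos h2 h1 hε
  -- key1 : norm bound on N ∩ ball
  have key1 : ∀ z : ↥X, z ∈ N → ‖z‖ ≤ 1 → ‖φ z‖ ≤ ‖φ‖ - c := by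
    intro z hz hz1
    rcases eq_or_ne (φ z) 0 with h | h
    · rw [h, norm_zero]; linarith
    · set a : ℂ := (‖φ z‖ : ℂ) / (φ z) with ha
      have hna : ‖a‖ = 1 := by
        rw [ha, norm_div, Complex.norm_real, norm_norm, div_self (norm_ne_zero_iff.mpr h)]
      have hu : a • z ∈ N := N.smul_mem a hz
      have hu1 : ‖a • z‖ ≤ 1 := by
        have : ‖a • z‖ = ‖a‖ * ‖z‖ := norm_smul a z
        rw [this, hna, one_mul]; exact hz1
      have := key0 (a • z) hu hu1
      have hφu : φ (a • z) = (‖φ z‖ : ℂ) := by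
        rw [map_smul, smul_eq_mul, ha, div_mul_cancel₀ _ h]
      rw [hφu] at this
      simpa using this
  -- Hahn-Banach
  obtain ⟨ψ, hψext, hψnorm⟩ := exists_extension_norm_eq N (φ.comp N.subtypeL)
  have hψbound : ‖ψ‖ ≤ ‖φ‖ - c := by
    rw [hψnorm]
    refine ContinuousLinearMap.opNorm_le_bound _ (by linarith) fun x => ?_
    have hfx : (φ.comp N.subtypeL) x = φ (x : ↥X) := rfl
    have hnx : ‖x‖ = ‖(x : ↥X)‖ := rfl
    change ‖φ (x : ↥X)‖ ≤ (‖φ‖ - c) * ‖(x : ↥X)‖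
    rcases eq_or_ne ((x : ↥X)) 0 with h | h
    · rw [h, map_zero, norm_zero]
      exact mul_nonneg (by linarith) (norm_nonneg _)
    · have hpos : 0 < ‖(x : ↥X)‖ := norm_pos_iff.mpr h
      have hmemN : ((‖(x : ↥X)‖⁻¹ : ℝ) : ℂ) • (x : ↥X) ∈ N := N.smul_mem _ x.2
      have hn1 : ‖((‖(x : ↥X)‖⁻¹ : ℝ) : ℂ) • (x : ↥X)‖ ≤ 1 := by
        have : ‖((‖(x : ↥X)‖⁻¹ : ℝ) : ℂ) • (x : ↥X)‖ = ‖((‖(x : ↥X)‖⁻¹ : ℝ) : ℂ)‖ * ‖(x : ↥X)‖ :=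
          norm_smul ((‖(x : ↥X)‖⁻¹ : ℝ) : ℂ) (x : ↥X)
        rw [this, Complex.norm_real, norm_inv, norm_norm,
          inv_mul_cancel₀ (ne_of_gt hpos)]
      have hk := key1 _ hmemN hn1
      rw [map_smul, smul_eq_mul, norm_mul, Complex.norm_real, norm_inv, norm_norm] at hk
      have h2 := mul_le_mul_of_nonneg_right hk hpos.le
      rw [inv_mul_eq_div, div_mul_cancel₀ _ (ne_of_gt hpos)] at h2
      exact h2
  -- φ - ψ vanishes on N, belongs to span
  have hker : (⨅ (v : ↥I), LinearMap.ker (Lmap v)) ≤ LinearMap.ker ((φ - ψ : StrongDual ℂ ↥X) : ↥X →ₗ[ℂ] ℂ) := by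
    intro z hz
    rw [LinearMap.mem_ker]
    have hzN : z ∈ N := hz
    have h1 := hψext ⟨z, hzN⟩
    have h2 : (φ.comp N.subtypeL) (⟨z, hzN⟩ : ↥N) = φ z := rfl
    rw [h2] at h1
    simp only [ContinuousLinearMap.coe_coe, ContinuousLinearMap.sub_apply]
    rw [h1]
    ring
  have hspan := mem_span_of_iInf_ker_le_ker hker
  haveI : Fintype ↥I := hIfin.fintype
  obtain ⟨cf, hcf⟩ := (Submodule.mem_span_range_iff_exists_fun ℂ).mp hspan
  -- φ - ψ is absolutely continuous
  have hAC : (φ - ψ) ∈ ACset X := by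
    refine ⟨∑ v : ↥I, cf v • ((topDualPairing ℂ V).flip v.1), ?_, ?_⟩
    · unfold WeakStarContinuous
      have heq : (fun w : WeakDual ℂ V =>
          (∑ v : ↥I, cf v • ((topDualPairing ℂ V).flip v.1)) (WeakDual.toStrongDual w)) =
          fun w : WeakDual ℂ V => ∑ v : ↥I, cf v * (topDualPairing ℂ V w v.1) := by
        funext w
        simp [LinearMap.sum_apply, LinearMap.smul_apply, LinearMap.flip_apply, smul_eq_mul]
        rfl
      rw [heq]
      exact continuous_finset_sum _ fun v _ =>
        continuous_const.mul (WeakBilin.eval_continuous (topDualPairing ℂ V) v.1)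
    · intro x
      have h1 := LinearMap.congr_fun hcf x
      simp only [LinearMap.coe_sum, Finset.sum_apply, LinearMap.smul_apply, smul_eq_mul] at h1
      simp only [LinearMap.sum_apply, LinearMap.smul_apply, LinearMap.flip_apply,
        topDualPairing_apply, smul_eq_mul]
      have h2 : ((φ - ψ : StrongDual ℂ ↥X) : ↥X →ₗ[ℂ] ℂ) x = (φ - ψ) x := rfl
      rw [← h2, ← h1]
      rfl
  -- contradiction via the decomposition
  rw [← hrange] at hAC
  obtain ⟨χ, hχ⟩ := hAC
  have hLfix : L (φ - ψ) = φ - ψ := by rw [← hχ]; exact hidem χ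
  have hLψ : L ψ = -(φ - ψ) := by
    have : L ψ = L φ - L (φ - ψ) := by
      calc L ψ = L (φ - (φ - ψ)) := by congr 1; abel
      _ = L φ - L (φ - ψ) := map_sub L φ (φ - ψ)
    rw [this, h0, hLfix]; abel
  have hψsub : ψ - L ψ = φ := by rw [hLψ]; abel
  have hn := hnorm ψ
  rw [hψsub] at hn
  have h6 : ‖φ‖ ≤ ‖ψ‖ := by
    have := ContinuousLinearMap.opNorm_nonneg (L ψ); linarith
  linarith

/-- a functional `φ ∈ X*` is singular (i.e. `L φ = 0`) iff there is a net
(formalized as a filter on an index type, with a map into the unit ball of `X`) converging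
to `0` in the weak-* topology of `W` along which `φ` converges to `‖φ‖`. -/
theorem stmt1 {V : Type u} [NormedAddCommGroup V] [NormedSpace ℂ V]
    (X : Subspace ℂ (StrongDual ℂ V)) (L : StrongDual ℂ ↥X →L[ℂ] StrongDual ℂ ↥X)
    (hL : IsLebesgueDecomposition X L) (φ : StrongDual ℂ ↥X) :
    L φ = 0 ↔ ∃ (ι : Type u) (l : Filter ι) (x : ι → ↥X), l.NeBot ∧
      (∀ i, ‖x i‖ ≤ 1) ∧
      Tendsto (fun i => StrongDual.toWeakDual ((x i : StrongDual ℂ V))) l (𝓝 0) ∧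
      Tendsto (fun i => φ (x i)) l (𝓝 (‖φ‖ : ℂ)) := by
  obtain ⟨hidem, hrange, hnorm⟩ := hL
  constructor
  · intro h0
    refine ⟨{x : ↥X // ‖x‖ ≤ 1},
      Filter.comap (fun p : {x : ↥X // ‖x‖ ≤ 1} =>
        (StrongDual.toWeakDual ((p.1 : StrongDual ℂ V)), φ p.1))
        (𝓝 ((0 : WeakDual ℂ V), (‖φ‖ : ℂ))),
      Subtype.val, ?_, fun i => i.2, ?_, ?_⟩
    · rw [Filter.comap_neBot_iff]
      intro t ht
      rw [mem_nhds_prod_iff] at ht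
      obtain ⟨u, hu, v, hv, huv⟩ := ht
      obtain ⟨ε, hε, hball⟩ := Metric.mem_nhds_iff.mp hv
      obtain ⟨x, hx1, hxU, hxε⟩ := stmt1_claim X L hidem hrange hnorm φ h0 u hu ε hε
      exact ⟨⟨x, hx1⟩, huv ⟨hxU, hball (by rwa [Metric.mem_ball, dist_eq_norm])⟩⟩
    · have h : Tendsto (fun p : {x : ↥X // ‖x‖ ≤ 1} =>
          (StrongDual.toWeakDual ((p.1 : StrongDual ℂ V)), φ p.1))
          (Filter.comap (fun p : {x : ↥X // ‖x‖ ≤ 1} =>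
            (StrongDual.toWeakDual ((p.1 : StrongDual ℂ V)), φ p.1))
            (𝓝 ((0 : WeakDual ℂ V), (‖φ‖ : ℂ))))
          (𝓝 ((0 : WeakDual ℂ V), (‖φ‖ : ℂ))) := Filter.tendsto_comap
      have hfst : Tendsto Prod.fst (𝓝 ((0 : WeakDual ℂ V), (‖φ‖ : ℂ)))
          (𝓝 (0 : WeakDual ℂ V)) := continuousAt_fst
      exact hfst.comp h
    · have h : Tendsto (fun p : {x : ↥X // ‖x‖ ≤ 1} =>
          (StrongDual.toWeakDual ((p.1 : StrongDual ℂ V)), φ p.1))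
          (Filter.comap (fun p : {x : ↥X // ‖x‖ ≤ 1} =>
            (StrongDual.toWeakDual ((p.1 : StrongDual ℂ V)), φ p.1))
            (𝓝 ((0 : WeakDual ℂ V), (‖φ‖ : ℂ))))
          (𝓝 ((0 : WeakDual ℂ V), (‖φ‖ : ℂ))) := Filter.tendsto_comap
      have hsnd : Tendsto Prod.snd (𝓝 ((0 : WeakDual ℂ V), (‖φ‖ : ℂ)))
          (𝓝 ((‖φ‖ : ℂ))) := continuousAt_snd
      exact hsnd.comp h
  · rintro ⟨ι, l, x, hne, hball, hw, hφ⟩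
    haveI := hne
    have hmem : L φ ∈ ACset X := hrange ▸ ⟨φ, rfl⟩
    obtain ⟨Φ, hΦc, hΦ⟩ := hmem
    have h1 : Tendsto (fun i => (L φ) (x i)) l (𝓝 0) := by
      have h2 : Tendsto (fun i =>
          Φ (WeakDual.toStrongDual (StrongDual.toWeakDual ((x i : StrongDual ℂ V))))) l
          (𝓝 (Φ (WeakDual.toStrongDual 0))) := (hΦc.tendsto 0).comp hw
      simpa [hΦ, map_zero] using h2
    have h3 : Tendsto (fun i => (φ - L φ) (x i)) l (𝓝 ((‖φ‖ : ℂ) - 0)) := by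
      simpa using hφ.sub h1
    have h4 : ‖((‖φ‖ : ℂ) - 0)‖ ≤ ‖φ - L φ‖ := by
      refine le_of_tendsto h3.norm (Eventually.of_forall fun i => ?_)
      calc ‖(φ - L φ) (x i)‖ ≤ ‖φ - L φ‖ * ‖x i‖ := (φ - L φ).le_opNorm _
      _ ≤ ‖φ - L φ‖ * 1 := mul_le_mul_of_nonneg_left (hball i) (ContinuousLinearMap.opNorm_nonneg _)
      _ = ‖φ - L φ‖ := mul_one _
    have h5 : ‖φ‖ ≤ ‖φ - L φ‖ := by simp at h4; rwa [abs_of_nonneg (ContinuousLinearMap.opNorm_nonneg φ)] at h4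
    have := hnorm φ
    have h6 : ‖L φ‖ ≤ 0 := by linarith
    have h7 : ‖L φ‖ = 0 := le_antisymm h6 (ContinuousLinearMap.opNorm_nonneg _)
    exact (ContinuousLinearMap.opNorm_zero_iff _).mp h7
end

section
/- Let X be a compact Hausdorff space, μ a regular Borel probability measure on X, and K ⊆ X a closed nowhere dense subset. Then for all continuous functions g, h ∈ C(X): ‖h‖_∞ ≤ ‖g·χ_K + h‖_{L^∞(μ)}, where χ_K is the indicator function of K. Consequently, for any state φ on C(X), the map g·χ_K + h ↦ φ(h) is a well-defined unital contractive linear functional on the subspace V = { g·χ_K + h : g, h ∈ C(X) } of L^∞(X, μ). -/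
open MeasureTheory

lemma key15 {X : Type*} [TopologicalSpace X] [CompactSpace X] [T2Space X]
    [MeasurableSpace X] [BorelSpace X]
    (μ : Measure X) [IsProbabilityMeasure μ] [μ.IsOpenPosMeasure]
    (K : Set X) (hK : IsClosed K) (hKnd : interior K = ∅)
    (g h : C(X, ℂ)) :
    ENNReal.ofReal ‖h‖ ≤
      eLpNorm (fun x => g x * K.indicator (fun _ => (1 : ℂ)) x + h x) ⊤ μ := by
  set f : X → ℂ := fun x => g x * K.indicator (fun _ => (1 : ℂ)) x + h x with hf
  by_contra hc
  push_neg at hc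
  have hne : eLpNorm f ⊤ μ ≠ ⊤ := (hc.trans_le le_top).ne
  have htr : (eLpNorm f ⊤ μ).toReal < ‖h‖ := by
    rw [← ENNReal.ofReal_lt_ofReal_iff_of_nonneg ENNReal.toReal_nonneg,
      ENNReal.ofReal_toReal hne]
    exact hc
  obtain ⟨c, hc1, hc2⟩ := exists_between htr
  have hc0 : 0 ≤ c := le_trans ENNReal.toReal_nonneg hc1.le
  have hx : ∃ x, c < ‖h x‖ := by
    by_contra hb
    push_neg at hb
    exact absurd ((h.norm_le hc0).mpr hb) (not_le.mpr hc2)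
  have hVopen : IsOpen {x | c < ‖h x‖} :=
    isOpen_lt continuous_const (h.continuous.norm)
  have hdense : Dense Kᶜ := by
    rwa [← interior_eq_empty_iff_dense_compl]
  have hUne : ({x | c < ‖h x‖} ∩ Kᶜ).Nonempty :=
    hdense.inter_open_nonempty _ hVopen hx
  have hUopen : IsOpen ({x | c < ‖h x‖} ∩ Kᶜ) := hVopen.inter hK.isOpen_compl
  have hUpos : 0 < μ ({x | c < ‖h x‖} ∩ Kᶜ) := hUopen.measure_pos μ hUne
  -- essSup bound
  have hlt : eLpNorm f ⊤ μ < ENNReal.ofReal c := by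
    rwa [← ENNReal.ofReal_toReal hne, ENNReal.ofReal_lt_ofReal_iff_of_nonneg
      ENNReal.toReal_nonneg]
  rw [eLpNorm_exponent_top, eLpNormEssSup] at hlt
  have hae := ae_lt_of_essSup_lt hlt
  rw [Filter.eventually_iff, mem_ae_iff] at hae
  refine absurd (measure_mono_null (fun x hx => ?_) hae) hUpos.ne'
  obtain ⟨hx1, hx2⟩ := hx
  have hfx : f x = h x := by
    simp [hf, Set.indicator_of_notMem hx2]
  simp only [Set.mem_compl_iff, Set.mem_setOf_eq, not_lt, hfx]
  rw [← ofReal_norm_eq_enorm]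
  exact ENNReal.ofReal_le_ofReal hx1.le

/-- let `X` be compact Hausdorff, `μ` a regular Borel probability measure
with full support, and `K ⊆ X` closed and nowhere dense. Then `‖h‖_∞ ≤ ‖g·χ_K + h‖_{L∞(μ)}`
for all continuous `g, h`, and consequently, for any state `φ` on `C(X)`, the assignment
`g·χ_K + h ↦ φ(h)` is a well-defined contractive (and unital) linear functional on the
subspace `V = {g·χ_K + h} ⊆ L∞(X, μ)`. -/
theorem stmt15 {X : Type*} [TopologicalSpace X] [CompactSpace X] [T2Space X]
    [MeasurableSpace X] [BorelSpace X]
    (μ : Measure X) [IsProbabilityMeasure μ] [μ.Regular] [μ.IsOpenPosMeasure]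
    (K : Set X) (hK : IsClosed K) (hKnd : interior K = ∅) :
    (∀ g h : C(X, ℂ),
      ENNReal.ofReal ‖h‖ ≤
        eLpNorm (fun x => g x * K.indicator (fun _ => (1 : ℂ)) x + h x) ⊤ μ) ∧
    ∀ φ : C(X, ℂ) →L[ℂ] ℂ, φ 1 = 1 → ‖φ‖ ≤ 1 →
      -- well-definedness on `V`
      (∀ g h g' h' : C(X, ℂ),
        (∀ᵐ x ∂μ, g x * K.indicator (fun _ => (1 : ℂ)) x + h x
          = g' x * K.indicator (fun _ => (1 : ℂ)) x + h' x) → φ h = φ h') ∧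
      -- contractivity of `g·χ_K + h ↦ φ(h)` on `V ⊆ L∞(X, μ)`
      (∀ g h : C(X, ℂ),
        ENNReal.ofReal ‖φ h‖ ≤
          eLpNorm (fun x => g x * K.indicator (fun _ => (1 : ℂ)) x + h x) ⊤ μ) := by
  refine ⟨fun g h => key15 μ K hK hKnd g h, fun φ hφ1 hφn => ⟨?_, ?_⟩⟩
  · intro g h g' h' hae
    have heq : h = h' := by
      have hae0 : (fun x => (g - g') x * K.indicator (fun _ => (1 : ℂ)) x + (h - h') x)
          =ᵐ[μ] (0 : X → ℂ) := by
        filter_upwards [hae] with x hx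
        simp only [ContinuousMap.sub_apply, Pi.zero_apply]
        ring_nf
        ring_nf at hx
        linear_combination hx
      have h0 : eLpNorm (fun x => (g - g') x * K.indicator (fun _ => (1 : ℂ)) x
          + (h - h') x) ⊤ μ = 0 := by
        rw [eLpNorm_congr_ae hae0, eLpNorm_zero]
      have := key15 μ K hK hKnd (g - g') (h - h')
      rw [h0, nonpos_iff_eq_zero, ENNReal.ofReal_eq_zero] at this
      have : ‖h - h'‖ = 0 := le_antisymm this (norm_nonneg _)
      rwa [norm_eq_zero, sub_eq_zero] at this
    rw [heq]
  · intro g h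
    refine le_trans ?_ (key15 μ K hK hKnd g h)
    apply ENNReal.ofReal_le_ofReal
    calc ‖φ h‖ ≤ ‖φ‖ * ‖h‖ := φ.le_opNorm h
    _ ≤ 1 * ‖h‖ := by gcongr
    _ = ‖h‖ := one_mul _
end

section
/- Let X be a compact Hausdorff space, μ a regular Borel probability measure on X with full support, and suppose there exists a closed nowhere dense subset K ⊆ X with μ(K) > 0. Then there exists a state ψ on L^∞(X, μ) whose restriction to C(X) equals integration against μ, but ψ is not weak-* continuous on L^∞(X, μ); in particular, the inclusion C(X) ⊆ L^∞(X, μ) does not have the Gleason–Whitney property for states relative to L^∞(X, μ). -/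
open MeasureTheory

open Set

namespace Stmt16Aux

variable {X : Type*} [TopologicalSpace X] [CompactSpace X] [T2Space X]
    [MeasurableSpace X] [BorelSpace X]
    (μ : Measure X) [IsProbabilityMeasure μ]

theorem memLp_cont (f : C(X, ℂ)) : MemLp (fun x => f x) ⊤ μ :=
  memLp_top_of_bound f.continuous.aestronglyMeasurable ‖f‖
    (Filter.Eventually.of_forall fun x => f.norm_coe_le_norm x)

noncomputable def chiK (K : Set X) (hK : IsClosed K) : Lp ℂ ⊤ μ :=
  indicatorConstLp ⊤ hK.measurableSet (measure_ne_top μ K) (1 : ℂ)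

noncomputable def T (K : Set X) (hK : IsClosed K) : (C(X, ℂ) × ℂ) →ₗ[ℂ] Lp ℂ ⊤ μ where
  toFun p := (memLp_cont μ p.1).toLp _ + p.2 • chiK μ K hK
  map_add' p q := by
    have h : (memLp_cont μ (p.1 + q.1)).toLp _
        = (memLp_cont μ p.1).toLp _ + (memLp_cont μ q.1).toLp _ :=
      MemLp.toLp_add (memLp_cont μ p.1) (memLp_cont μ q.1)
    simp only [Prod.fst_add, Prod.snd_add, h, add_smul]
    abel
  map_smul' c p := by
    have h : (memLp_cont μ (c • p.1)).toLp _ = c • (memLp_cont μ p.1).toLp _ :=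
      MemLp.toLp_const_smul c (memLp_cont μ p.1)
    simp only [Prod.smul_fst, Prod.smul_snd, h, smul_eq_mul, RingHom.id_apply, smul_smul,
      smul_add]

noncomputable def L : (C(X, ℂ) × ℂ) →ₗ[ℂ] ℂ where
  toFun p := ∫ x, p.1 x ∂μ
  map_add' p q := by
    simp only [Prod.fst_add, ContinuousMap.add_apply]
    exact integral_add ((memLp_cont μ p.1).integrable le_top)
      ((memLp_cont μ q.1).integrable le_top)
  map_smul' c p := by
    simp only [Prod.smul_fst, ContinuousMap.smul_apply, RingHom.id_apply, smul_eq_mul]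
    exact integral_smul c _

theorem key [μ.IsOpenPosMeasure] {K : Set X} (hK : IsClosed K) (hKnd : interior K = ∅)
    (f : C(X, ℂ)) (c : ℂ) :
    ‖∫ x, f x ∂μ‖ ≤ ‖T μ K hK (f, c)‖ := by
  set F := T μ K hK (f, c) with hF
  -- a.e. description of F
  have hcoe : (F : X → ℂ) =ᵐ[μ] fun x => f x + c * K.indicator (fun _ => (1 : ℂ)) x := by
    have h1 : ((F : Lp ℂ ⊤ μ) : X → ℂ)
        =ᵐ[μ] ((memLp_cont μ f).toLp _ : X → ℂ) + (c • chiK μ K hK : Lp ℂ ⊤ μ) := Lp.coeFn_add _ _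
    have h2 : ((memLp_cont μ f).toLp _ : X → ℂ) =ᵐ[μ] fun x => f x := MemLp.coeFn_toLp _
    have h3 : ((c • chiK μ K hK : Lp ℂ ⊤ μ) : X → ℂ) =ᵐ[μ] c • (chiK μ K hK : X → ℂ) :=
      Lp.coeFn_smul _ _
    have h4 : ((chiK μ K hK : Lp ℂ ⊤ μ) : X → ℂ) =ᵐ[μ] K.indicator (fun _ => (1 : ℂ)) :=
      indicatorConstLp_coeFn
    filter_upwards [h1, h2, h3, h4] with x e1 e2 e3 e4
    simp only [e1, Pi.add_apply, e2, e3, Pi.smul_apply, e4, smul_eq_mul]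
  have hbound : ∀ᵐ x ∂μ, ‖f x + c * K.indicator (fun _ => (1 : ℂ)) x‖ ≤ ‖F‖ := by
    have h := enorm_ae_le_eLpNormEssSup (F : X → ℂ) μ
    have hne : eLpNormEssSup (F : X → ℂ) μ ≠ ⊤ := by
      rw [← eLpNorm_exponent_top]; exact Lp.eLpNorm_ne_top F
    filter_upwards [h, hcoe] with x hx hxe
    rw [← hxe]
    have := ENNReal.toReal_mono hne hx
    simpa [Lp.norm_def, eLpNorm_exponent_top] using this
  -- all points of Kᶜ satisfy the bound
  have hcompl : ∀ x ∈ Kᶜ, ‖f x‖ ≤ ‖F‖ := by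
    intro x hx
    by_contra hlt
    push_neg at hlt
    set V : Set X := Kᶜ ∩ {y | ‖F‖ < ‖f y‖} with hV
    have hVopen : IsOpen V :=
      hK.isOpen_compl.inter (isOpen_lt continuous_const (continuous_norm.comp f.continuous))
    have hVne : μ V ≠ 0 := (hVopen.measure_pos μ ⟨x, hx, hlt⟩).ne'
    have hae : ∀ᵐ y ∂μ.restrict V, ‖f y + c * K.indicator (fun _ => (1 : ℂ)) y‖ ≤ ‖F‖ :=
      ae_restrict_of_ae hbound
    obtain ⟨y, hyV, hy⟩ := Measure.exists_mem_of_measure_ne_zero_of_ae hVne hae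
    have hyK : y ∉ K := hyV.1
    rw [Set.indicator_of_notMem hyK, mul_zero, add_zero] at hy
    exact absurd hy (not_le.mpr hyV.2)
  -- extend to all of X by density
  have hall : ∀ x, ‖f x‖ ≤ ‖F‖ := by
    have hdense : Dense Kᶜ := interior_eq_empty_iff_dense_compl.mp hKnd
    have hclosed : IsClosed {x | ‖f x‖ ≤ ‖F‖} :=
      isClosed_le (continuous_norm.comp f.continuous) continuous_const
    intro x
    have : closure Kᶜ ⊆ {x | ‖f x‖ ≤ ‖F‖} := hclosed.closure_subset_iff.mpr hcompl
    exact this (hdense x)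
  calc ‖∫ x, f x ∂μ‖ ≤ ‖F‖ * (μ univ).toReal :=
        norm_integral_le_of_norm_le_const (Filter.Eventually.of_forall hall)
    _ = ‖F‖ := by simp

end Stmt16Aux

open Stmt16Aux

/-- if `X` is compact Hausdorff, `μ` a regular Borel probability measure
with full support, and there is a closed nowhere dense `K ⊆ X` with `μ(K) > 0`, then
there is a state `ψ` on `L∞(X, μ)` restricting to integration against `μ` on `C(X)` but
not weak-* continuous (not given by integration against an `L¹(μ)` function); in
particular the inclusion `C(X) ⊆ L∞(X, μ)` fails the Gleason–Whitney property for
states relative to `L∞(X, μ)`. -/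
theorem stmt16 {X : Type*} [TopologicalSpace X] [CompactSpace X] [T2Space X]
    [MeasurableSpace X] [BorelSpace X]
    (μ : Measure X) [IsProbabilityMeasure μ] [μ.Regular] [μ.IsOpenPosMeasure]
    (K : Set X) (hK : IsClosed K) (hKnd : interior K = ∅) (hKpos : 0 < μ K) :
    ∃ ψ : Lp ℂ ⊤ μ →L[ℂ] ℂ,
      ‖ψ‖ ≤ 1 ∧
      (∀ h1 : MemLp (fun _ : X => (1 : ℂ)) ⊤ μ, ψ (h1.toLp _) = 1) ∧
      (∀ f : C(X, ℂ), ∀ hf : MemLp (fun x => f x) ⊤ μ,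
        ψ (hf.toLp _) = ∫ x, f x ∂μ) ∧
      ¬ ∃ g : X → ℂ, Integrable g μ ∧
        ∀ u : Lp ℂ ⊤ μ, ψ u = ∫ x, u x * g x ∂μ := by
  classical
  set Tm := Stmt16Aux.T μ K hK with hTm
  set Lm := Stmt16Aux.L (X := X) μ with hLm
  have hLmval : ∀ p : C(X, ℂ) × ℂ, Lm p = ∫ x, p.1 x ∂μ := fun p => rfl
  have hkey : ∀ p : C(X, ℂ) × ℂ, ‖Lm p‖ ≤ ‖Tm p‖ := by
    intro p
    have h := Stmt16Aux.key μ hK hKnd p.1 p.2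
    simpa [hLmval] using h
  have hker : LinearMap.ker Tm ≤ LinearMap.ker Lm := by
    intro p hp
    rw [LinearMap.mem_ker] at hp ⊢
    have h := hkey p
    rw [hp, norm_zero] at h
    exact norm_le_zero_iff.mp h
  set φ₀ : LinearMap.range Tm →ₗ[ℂ] ℂ :=
    (Submodule.liftQ (LinearMap.ker Tm) Lm hker).comp
      (LinearMap.quotKerEquivRange Tm).symm.toLinearMap with hφ₀def
  have hφ₀ : ∀ p : C(X, ℂ) × ℂ, ∀ hmem : Tm p ∈ LinearMap.range Tm,
      φ₀ ⟨Tm p, hmem⟩ = ∫ x, p.1 x ∂μ := by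
    intro p hmem
    have h1 : (⟨Tm p, hmem⟩ : LinearMap.range Tm)
        = LinearMap.quotKerEquivRange Tm (Submodule.Quotient.mk p) := by
      ext
      rw [LinearMap.quotKerEquivRange_apply_mk]
    rw [hφ₀def, LinearMap.comp_apply, LinearEquiv.coe_toLinearMap, h1,
      LinearEquiv.symm_apply_apply, Submodule.liftQ_apply]
    exact hLmval p
  have hφ₀le : ∀ y : LinearMap.range Tm, ‖φ₀ y‖ ≤ 1 * ‖(y : Lp ℂ ⊤ μ)‖ := by
    rintro ⟨y, p, rfl⟩
    rw [one_mul, hφ₀ p ⟨p, rfl⟩]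
    simpa [hLmval] using hkey p
  set φ : LinearMap.range Tm →L[ℂ] ℂ := LinearMap.mkContinuous φ₀ 1 hφ₀le with hφdef
  obtain ⟨ψ, hext, hnorm⟩ := exists_extension_norm_eq (LinearMap.range Tm) φ
  have hψT : ∀ p : C(X, ℂ) × ℂ, ψ (Tm p) = ∫ x, p.1 x ∂μ := by
    intro p
    have h := hext ⟨Tm p, LinearMap.mem_range_self Tm p⟩
    rw [Submodule.coe_mk] at h
    rw [h, hφdef]
    exact hφ₀ p _
  have hψf : ∀ f : C(X, ℂ), ∀ hf : MemLp (fun x => f x) ⊤ μ,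
      ψ (hf.toLp _) = ∫ x, f x ∂μ := by
    intro f hf
    have h : hf.toLp _ = Tm (f, 0) := by
      show hf.toLp _ = (memLp_cont μ f).toLp _ + (0 : ℂ) • chiK μ K hK
      rw [zero_smul, add_zero]
    rw [h]
    exact hψT (f, 0)
  have hnle : ‖ψ‖ ≤ 1 := by
    rw [hnorm]
    exact LinearMap.mkContinuous_norm_le φ₀ zero_le_one hφ₀le
  refine ⟨ψ, hnle, ?_, hψf, ?_⟩
  · intro h1
    have h : ψ (MemLp.toLp (fun _ : X => (1 : ℂ)) h1) = ∫ x, (ContinuousMap.const X (1 : ℂ)) x ∂μ :=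
      hψf (ContinuousMap.const X 1) h1
    rw [h]
    simp
  · rintro ⟨g, hg, hrep⟩
    set χ := chiK μ K hK with hχdef
    have hψχ : ψ χ = 0 := by
      have h : χ = Tm ((0 : C(X, ℂ)), (1 : ℂ)) := by
        show χ = (memLp_cont μ 0).toLp _ + (1 : ℂ) • χ
        have hz : (memLp_cont μ (0 : C(X, ℂ))).toLp _ = 0 := MemLp.toLp_zero _
        rw [hz, one_smul, zero_add]
      rw [h, hψT]
      simp
    have hgind : ∫ x, K.indicator (fun _ => (1 : ℂ)) x * g x ∂μ = 0 := by
      have h := hrep χ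
      rw [hψχ] at h
      have hcongr : ∫ x, (χ : X → ℂ) x * g x ∂μ
          = ∫ x, K.indicator (fun _ => (1 : ℂ)) x * g x ∂μ := by
        refine integral_congr_ae ?_
        filter_upwards [(indicatorConstLp_coeFn :
          (χ : X → ℂ) =ᵐ[μ] K.indicator (fun _ => (1 : ℂ)))] with x hx
        exact congrArg (fun t => t * g x) hx
      rw [hcongr] at h
      exact h.symm
    have hfin : ∫⁻ x, ‖g x‖₊ ∂μ ≠ ⊤ := hg.2.ne
    obtain ⟨δ, hδ0, hδ⟩ := exists_pos_setLIntegral_lt_of_measure_lt hfin hKpos.ne'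
    obtain ⟨U, hKU, hUopen, hUlt⟩ :=
      K.exists_isOpen_lt_of_lt _ (ENNReal.lt_add_right (measure_ne_top μ K) hδ0.ne')
    have hdiff : μ (U \ K) < δ := by
      rw [measure_diff hKU hK.measurableSet.nullMeasurableSet (measure_ne_top μ K)]
      rw [ENNReal.sub_lt_iff_lt_right (measure_ne_top μ K) (measure_mono hKU)]
      rwa [add_comm]
    have hdisj : Disjoint Uᶜ K := disjoint_compl_left.mono_right hKU
    obtain ⟨f, hf0, hf1, hf01⟩ :=
      exists_continuous_zero_one_of_isClosed hUopen.isClosed_compl hK hdisj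
    set fC : C(X, ℂ) := ⟨fun x => (f x : ℂ), Complex.continuous_ofReal.comp f.continuous⟩
      with hfCdef
    have hfCmem := memLp_cont μ fC
    have hv1 : ψ (hfCmem.toLp _) = ∫ x, (f x : ℂ) ∂μ := hψf fC hfCmem
    have hv2 : ψ (hfCmem.toLp _) = ∫ x, (f x : ℂ) * g x ∂μ := by
      rw [hrep _]
      refine integral_congr_ae ?_
      filter_upwards [hfCmem.coeFn_toLp] with x hx
      rw [hx]
      rfl
    have hindSM : AEStronglyMeasurable (fun x => K.indicator (fun _ => (1 : ℂ)) x) μ :=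
      (stronglyMeasurable_const.indicator hK.measurableSet).aestronglyMeasurable
    have hint1 : Integrable (fun x => K.indicator (fun _ => (1 : ℂ)) x * g x) μ := by
      refine hg.bdd_mul (c := 1) hindSM (Filter.Eventually.of_forall fun x => ?_)
      by_cases hxK : x ∈ K <;> simp [Set.indicator, hxK]
    have hfCnorm : ∀ x, ‖(f x : ℂ)‖ ≤ 1 := by
      intro x
      rw [Complex.norm_real, Real.norm_eq_abs]
      exact abs_le.mpr ⟨by linarith [(hf01 x).1], (hf01 x).2⟩
    have hint2 : Integrable (fun x => (f x : ℂ) * g x) μ :=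
      hg.bdd_mul (Complex.continuous_ofReal.comp f.continuous).aestronglyMeasurable
        (c := 1) (Filter.Eventually.of_forall hfCnorm)
    have hsplit : ∫ x, (f x : ℂ) * g x ∂μ
        = ∫ x, ((f x : ℂ) - K.indicator (fun _ => (1 : ℂ)) x) * g x ∂μ := by
      rw [eq_comm]
      calc ∫ x, ((f x : ℂ) - K.indicator (fun _ => (1 : ℂ)) x) * g x ∂μ
          = ∫ x, ((f x : ℂ) * g x - K.indicator (fun _ => (1 : ℂ)) x * g x) ∂μ := by
            simp only [sub_mul]
        _ = (∫ x, (f x : ℂ) * g x ∂μ) - ∫ x, K.indicator (fun _ => (1 : ℂ)) x * g x ∂μ :=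
            integral_sub hint2 hint1
        _ = ∫ x, (f x : ℂ) * g x ∂μ := by rw [hgind, sub_zero]
    have hrealint : Integrable (fun x => f x) μ :=
      (memLp_top_of_bound f.continuous.aestronglyMeasurable ‖f‖
        (Filter.Eventually.of_forall fun x => f.norm_coe_le_norm x)).integrable le_top
    have hlow : (μ K).toReal ≤ ∫ x, f x ∂μ := by
      have hmono : ∫ x, K.indicator (fun _ => (1 : ℝ)) x ∂μ ≤ ∫ x, f x ∂μ := by
        refine integral_mono ?_ hrealint ?_
        · exact (integrable_indicator_iff hK.measurableSet).mpr
            ((integrableOn_const_iff (C := (1 : ℝ))).mpr (Or.inr (measure_lt_top μ K)))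
        · intro x
          by_cases hxK : x ∈ K
          · rw [Set.indicator_of_mem hxK]
            exact (hf1 hxK).ge
          · rw [Set.indicator_of_notMem hxK]
            exact (hf01 x).1
      rwa [integral_indicator_const (1 : ℝ) hK.measurableSet, smul_eq_mul, mul_one] at hmono
    have hup : ‖∫ x, ((f x : ℂ) - K.indicator (fun _ => (1 : ℂ)) x) * g x ∂μ‖
        < (μ K).toReal := by
      have h1 := norm_integral_le_lintegral_norm
        (μ := μ) (fun x => ((f x : ℂ) - K.indicator (fun _ => (1 : ℂ)) x) * g x)
      have h2 : ∫⁻ x, ENNReal.ofReal ‖((f x : ℂ) - K.indicator (fun _ => (1 : ℂ)) x) * g x‖ ∂μ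
          ≤ ∫⁻ x in U \ K, ‖g x‖₊ ∂μ := by
        rw [← lintegral_indicator (hUopen.measurableSet.diff hK.measurableSet)
          (fun x => (‖g x‖₊ : ENNReal))]
        refine lintegral_mono fun x => ?_
        by_cases hxK : x ∈ K
        · have hfx : f x = 1 := hf1 hxK
          simp [Set.indicator, hxK, hfx, Set.mem_diff]
        · by_cases hxU : x ∈ U
          · have hx : x ∈ U \ K := ⟨hxU, hxK⟩
            rw [Set.indicator_of_mem hx]
            rw [← enorm_eq_nnnorm, ← ofReal_norm]
            apply ENNReal.ofReal_le_ofReal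
            rw [Set.indicator_of_notMem hxK, sub_zero, norm_mul]
            calc ‖(f x : ℂ)‖ * ‖g x‖ ≤ 1 * ‖g x‖ := by
                  exact mul_le_mul_of_nonneg_right (hfCnorm x) (norm_nonneg _)
              _ = ‖g x‖ := one_mul _
          · have hfx : f x = 0 := hf0 hxU
            have hxd : x ∉ U \ K := fun hc => hxU hc.1
            simp [Set.indicator, hxK, hxd, hfx]
      have h3 : ∫⁻ x in U \ K, ‖g x‖₊ ∂μ < μ K := hδ _ hdiff
      have h4 := h2.trans_lt h3
      calc ‖∫ x, ((f x : ℂ) - K.indicator (fun _ => (1 : ℂ)) x) * g x ∂μ‖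
          ≤ (∫⁻ x, ENNReal.ofReal
              ‖((f x : ℂ) - K.indicator (fun _ => (1 : ℂ)) x) * g x‖ ∂μ).toReal := h1
        _ < (μ K).toReal :=
            (ENNReal.toReal_lt_toReal (ne_top_of_lt h4) (measure_ne_top μ K)).mpr h4
    have hfnn : (0 : ℝ) ≤ ∫ x, f x ∂μ := integral_nonneg fun x => (hf01 x).1
    have heq : ((∫ x, f x ∂μ : ℝ) : ℂ)
        = ∫ x, ((f x : ℂ) - K.indicator (fun _ => (1 : ℂ)) x) * g x ∂μ := by
      have hcoe : ((∫ x, f x ∂μ : ℝ) : ℂ) = ∫ x, (f x : ℂ) ∂μ := integral_ofReal.symm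
      rw [hcoe, ← hv1, hv2, hsplit]
    have hge : (μ K).toReal ≤ ‖∫ x, ((f x : ℂ) - K.indicator (fun _ => (1 : ℂ)) x) * g x ∂μ‖ := by
      rw [← heq, Complex.norm_real, Real.norm_eq_abs, abs_of_nonneg hfnn]
      exact hlow
    linarith
end
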